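/- Let Q be a quadratic form on a finite-dimensional real vector space V of signature (2, dim V − 2), and let Z : V → ℂ be an ℝ-linear map such that Q(v) < 0 for every nonzero v in the kernel of Z. Fix z₀ ∈ ℂ, let ρ = {t·z₀ : t ∈ ℝ, t ≥ 0}, and let C⁺ = {v ∈ V : Z(v) ∈ ρ and Q(v) ≥ 0}. Then every w ∈ C⁺ with Q(w) = 0 spans an extremal ray of C⁺: whenever w = w₁ + w₂ with w₁, w₂ ∈ C⁺, both w₁ and w₂ are nonnegative scalar multiples of w. -/

import Mathlib

/-- Lemma 3.9 of the paper, second statement.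
`Q` is a quadratic form of signature `(2, dim V − 2)` on a finite-dimensional real vector
space `V` (i.e. in some basis it is `x₀² + x₁² − x₂² − ⋯`), `Z : V → ℂ` is ℝ-linear with
`Q < 0` on `ker Z ∖ {0}`, and `C⁺ = {v | Z v ∈ ρ ∧ Q v ≥ 0}` for a ray
`ρ = {t·z₀ : t ≥ 0}`.  Then every `w ∈ C⁺` with `Q(w) = 0` spans an extremal ray of `C⁺`:
whenever `w = w₁ + w₂` with `w₁, w₂ ∈ C⁺`, both `w₁` and `w₂` are nonnegative scalar
multiples of `w`. -/
theorem stmt_3 (n : ℕ) (V : Type*) [AddCommGroup V] [Module ℝ V] [FiniteDimensional ℝ V]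
    (hdim : Module.finrank ℝ V = n + 2)
    (Q : QuadraticForm ℝ V)
    (hsig : ∃ b : Module.Basis (Fin (n + 2)) ℝ V, ∀ v : V,
      Q v = (b.repr v 0) ^ 2 + (b.repr v 1) ^ 2 - ∑ i : Fin n, (b.repr v i.succ.succ) ^ 2)
    (Z : V →ₗ[ℝ] ℂ)
    (hker : ∀ v : V, Z v = 0 → v ≠ 0 → Q v < 0)
    (z₀ : ℂ) (Cplus : Set V)
    (hC : Cplus = {v : V | (∃ t : ℝ, 0 ≤ t ∧ Z v = t • z₀) ∧ 0 ≤ Q v})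
    (w : V) (hw : w ∈ Cplus) (hQw : Q w = 0) :
    ∀ w₁ ∈ Cplus, ∀ w₂ ∈ Cplus, w = w₁ + w₂ →
      (∃ c₁ : ℝ, 0 ≤ c₁ ∧ w₁ = c₁ • w) ∧ (∃ c₂ : ℝ, 0 ≤ c₂ ∧ w₂ = c₂ • w) := by
  subst hC
  intro w₁ hw₁ w₂ hw₂ hsum
  obtain ⟨⟨t₁, ht₁, hZ₁⟩, hQ₁⟩ := hw₁
  obtain ⟨⟨t₂, ht₂, hZ₂⟩, hQ₂⟩ := hw₂
  -- any vector in the kernel of `Z` with nonnegative `Q` must vanish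
  have hzero : ∀ v : V, Z v = 0 → 0 ≤ Q v → v = 0 := by
    intro v hZv hQv
    by_contra h
    exact absurd hQv (not_le.2 (hker v hZv h))
  rcases eq_or_lt_of_le ht₁ with h1 | h1
  · -- `t₁ = 0`, so `Z w₁ = 0` and hence `w₁ = 0`
    have hw10 : w₁ = 0 := hzero _ (by rw [hZ₁, ← h1, zero_smul]) hQ₁
    exact ⟨⟨0, le_refl 0, by simp [hw10]⟩, ⟨1, zero_le_one, by simp [hsum, hw10]⟩⟩
  rcases eq_or_lt_of_le ht₂ with h2 | h2
  · have hw20 : w₂ = 0 := hzero _ (by rw [hZ₂, ← h2, zero_smul]) hQ₂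
    exact ⟨⟨1, zero_le_one, by simp [hsum, hw20]⟩, ⟨0, le_refl 0, by simp [hw20]⟩⟩
  -- both `t₁, t₂ > 0`.  Consider `v = t₂ • w₁ - t₁ • w₂ ∈ ker Z`.
  set v : V := t₂ • w₁ - t₁ • w₂ with hv
  have hZv : Z v = 0 := by
    rw [hv, map_sub, map_smul, map_smul, hZ₁, hZ₂, smul_smul, smul_smul,
      mul_comm t₂ t₁, sub_self]
  have hpolar : QuadraticMap.polar Q w₁ w₂ = -(Q w₁) - Q w₂ := by
    have := hQw
    rw [hsum] at this
    simp only [QuadraticMap.polar, this]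
    ring
  have hQv : Q v = (t₁ + t₂) * (t₂ * Q w₁ + t₁ * Q w₂) := by
    have hQvexp : Q v = Q (t₂ • w₁) + Q (-(t₁ • w₂))
        + QuadraticMap.polar Q (t₂ • w₁) (-(t₁ • w₂)) := by
      rw [hv, sub_eq_add_neg]
      simp [QuadraticMap.polar]
    rw [hQvexp, QuadraticMap.polar_neg_right, QuadraticMap.polar_smul_left,
      QuadraticMap.polar_smul_right, QuadraticMap.map_smul, QuadraticMap.map_neg,
      QuadraticMap.map_smul, hpolar]
    simp only [smul_eq_mul]
    ring
  have hv0 : v = 0 := by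
    refine hzero v hZv ?_
    rw [hQv]
    have : 0 ≤ t₂ * Q w₁ + t₁ * Q w₂ := by positivity
    positivity
  have hkey : t₂ • w₁ = t₁ • w₂ := sub_eq_zero.mp hv0
  have ht : (0:ℝ) < t₁ + t₂ := by linarith
  have hw₁eq : (t₁ + t₂) • w₁ = t₁ • w := by
    rw [hsum, add_smul, smul_add, hkey]
  have hw₂eq : (t₁ + t₂) • w₂ = t₂ • w := by
    rw [hsum, add_smul, smul_add, ← hkey]
  refine ⟨⟨t₁ / (t₁ + t₂), by positivity, ?_⟩, ⟨t₂ / (t₁ + t₂), by positivity, ?_⟩⟩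
  · rw [div_eq_inv_mul, mul_smul, ← hw₁eq, smul_smul, inv_mul_cancel₀ ht.ne', one_smul]
  · rw [div_eq_inv_mul, mul_smul, ← hw₂eq, smul_smul, inv_mul_cancel₀ ht.ne', one_smul]
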